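/- Let d ≥ 1, R_y > 0 and σ > 0. For x ∈ ℝ^d and y ∈ ℝ define F(x,y) ∈ ℝ^{d(d+1)/2 + d + 1} with blocks t₂(x), y·x, and y² (i.e., the case σ₁ = σ₂ = σ₃ = σ of the linear-regression statistic map, where the per-coordinate scalings cancel). Then for all x, x' ∈ ℝ^d with ‖x‖₂ ≤ 1 and ‖x'‖₂ ≤ 1 and all y, y' ∈ ℝ with |y| ≤ R_y and |y'| ≤ R_y, counting the squared distance of the t₂ blocks as Σ_j (x_j² − x'_j²)² + 2 Σ_{j<k} (x_j x_k − x'_j x'_k)², one has ‖F(x,y) − F(x',y')‖₂ ≤ √(3 R_y⁴ / 2 + 2 R_y² + 2). -/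

import Mathlib

open scoped RealInnerProductSpace

private lemma sq_sum_aux {d : ℕ} (g : Fin d → ℝ) :
    (∑ j, g j) ^ 2 = ∑ j, g j ^ 2 + 2 * ∑ j, ∑ k ∈ Finset.Ioi j, g j * g k := by
  have h := Finset.sum_sum_Ioi_add_eq_sum_sum_off_diag (fun i j => g i * g j)
  have h' : 2 * ∑ j, ∑ k ∈ Finset.Ioi j, g j * g k
      = ∑ i : Fin d, ∑ j ∈ ({i}ᶜ : Finset (Fin d)), g j * g i := by
    calc 2 * ∑ j, ∑ k ∈ Finset.Ioi j, g j * g k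
        = ∑ i : Fin d, ∑ j ∈ Finset.Ioi i, (g j * g i + g i * g j) := by
          rw [Finset.mul_sum]
          refine Finset.sum_congr rfl fun i _ => ?_
          rw [Finset.mul_sum]
          exact Finset.sum_congr rfl fun j _ => by ring
      _ = _ := by convert h using 4
  have h3 : ∀ i : Fin d, ∑ j : Fin d, g i * g j
      = g i ^ 2 + ∑ j ∈ ({i}ᶜ : Finset (Fin d)), g j * g i := by
    intro i
    rw [← Finset.sum_compl_add_sum ({i} : Finset (Fin d)) (fun j => g i * g j),
      Finset.sum_singleton, add_comm]
    congr 1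
    · ring
    · exact Finset.sum_congr rfl fun j _ => mul_comm _ _
  calc (∑ j, g j) ^ 2 = ∑ i : Fin d, ∑ j : Fin d, g i * g j := by
        rw [sq, Finset.sum_mul_sum]
    _ = ∑ i : Fin d, (g i ^ 2 + ∑ j ∈ ({i}ᶜ : Finset (Fin d)), g j * g i) :=
        Finset.sum_congr rfl fun i _ => h3 i
    _ = ∑ j, g j ^ 2 + ∑ i : Fin d, ∑ j ∈ ({i}ᶜ : Finset (Fin d)), g j * g i :=
        Finset.sum_add_distrib
    _ = ∑ j, g j ^ 2 + 2 * ∑ j, ∑ k ∈ Finset.Ioi j, g j * g k := by rw [h']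

set_option maxHeartbeats 1000000 in
/-- Corollary 1: the special case R = 1, σ₁ = σ₂ = σ₃ of the linear-regression
sensitivity bound.  F(x,y) has blocks t₂(x), y·x and y². -/
theorem linear_regression_sensitivity_special_case
    (d : ℕ) (hd : 1 ≤ d) (Ry σ : ℝ) (hRy : 0 < Ry) (hσ : 0 < σ)
    (x x' : EuclideanSpace ℝ (Fin d)) (y y' : ℝ)
    (hx : ‖x‖ ≤ 1) (hx' : ‖x'‖ ≤ 1) (hy : |y| ≤ Ry) (hy' : |y'| ≤ Ry) :
    Real.sqrt ((∑ j, (x j ^ 2 - x' j ^ 2) ^ 2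
        + 2 * ∑ j, ∑ k ∈ Finset.Ioi j, (x j * x k - x' j * x' k) ^ 2)
      + ∑ j, (y * x j - y' * x' j) ^ 2
      + (y ^ 2 - y' ^ 2) ^ 2)
      ≤ Real.sqrt (3 * Ry ^ 4 / 2 + 2 * Ry ^ 2 + 2) := by
  set S := ∑ j, x j ^ 2 with hSdef
  set T := ∑ j, x' j ^ 2 with hTdef
  set C := ∑ j, x j * x' j with hCdef
  apply Real.sqrt_le_sqrt
  -- norms
  have hnx : ‖x‖ ^ 2 = S := by
    rw [EuclideanSpace.norm_eq, Real.sq_sqrt (by positivity)]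
    exact Finset.sum_congr rfl fun j _ => by rw [Real.norm_eq_abs, sq_abs]
  have hnx' : ‖x'‖ ^ 2 = T := by
    rw [EuclideanSpace.norm_eq, Real.sq_sqrt (by positivity)]
    exact Finset.sum_congr rfl fun j _ => by rw [Real.norm_eq_abs, sq_abs]
  have hS1 : S ≤ 1 := by
    rw [← hnx]; nlinarith [norm_nonneg x]
  have hT1 : T ≤ 1 := by
    rw [← hnx']; nlinarith [norm_nonneg x']
  have hS0 : 0 ≤ S := Finset.sum_nonneg fun j _ => sq_nonneg _
  have hT0 : 0 ≤ T := Finset.sum_nonneg fun j _ => sq_nonneg _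
  have hCS : C ^ 2 ≤ S * T := Finset.sum_mul_sq_le_sq_mul_sq _ _ _
  -- identities for the three blocks
  have e1 := sq_sum_aux (fun j => x j ^ 2)
  have e2 := sq_sum_aux (fun j => x' j ^ 2)
  have e3 := sq_sum_aux (fun j => x j * x' j)
  have key : ∑ j, (x j ^ 2 - x' j ^ 2) ^ 2
        + 2 * ∑ j, ∑ k ∈ Finset.Ioi j, (x j * x k - x' j * x' k) ^ 2
      = S ^ 2 + T ^ 2 - 2 * C ^ 2 := by
    have hdiag : ∑ j, (x j ^ 2 - x' j ^ 2) ^ 2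
        = ∑ j, (x j ^ 2) ^ 2 + ∑ j, (x' j ^ 2) ^ 2 - 2 * ∑ j, (x j * x' j) ^ 2 := by
      rw [Finset.mul_sum, ← Finset.sum_add_distrib, ← Finset.sum_sub_distrib]
      exact Finset.sum_congr rfl fun j _ => by ring
    have hoff : ∑ j, ∑ k ∈ Finset.Ioi j, (x j * x k - x' j * x' k) ^ 2
        = ∑ j, ∑ k ∈ Finset.Ioi j, x j ^ 2 * x k ^ 2
          + ∑ j, ∑ k ∈ Finset.Ioi j, x' j ^ 2 * x' k ^ 2
          - 2 * ∑ j, ∑ k ∈ Finset.Ioi j, (x j * x' j) * (x k * x' k) := by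
      rw [Finset.mul_sum, ← Finset.sum_add_distrib, ← Finset.sum_sub_distrib]
      refine Finset.sum_congr rfl fun j _ => ?_
      rw [Finset.mul_sum, ← Finset.sum_add_distrib, ← Finset.sum_sub_distrib]
      exact Finset.sum_congr rfl fun k _ => by ring
    rw [hdiag, hoff]
    simp only at e1 e2 e3
    rw [hSdef, hTdef, hCdef]
    linarith [e1, e2, e3]
  have mid : ∑ j, (y * x j - y' * x' j) ^ 2
      = y ^ 2 * S + y' ^ 2 * T - 2 * (y * y') * C := by
    rw [hSdef, hTdef, hCdef, Finset.mul_sum, Finset.mul_sum, Finset.mul_sum,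
      ← Finset.sum_add_distrib, ← Finset.sum_sub_distrib]
    exact Finset.sum_congr rfl fun j _ => by ring
  rw [key, mid]
  obtain ⟨hy1, hy2'⟩ := abs_le.mp hy
  obtain ⟨hy'1, hy'2'⟩ := abs_le.mp hy'
  have hy2 : y ^ 2 ≤ Ry ^ 2 := sq_le_sq' hy1 hy2'
  have hy'2 : y' ^ 2 ≤ Ry ^ 2 := sq_le_sq' hy'1 hy'2'
  have hA : -2 * C ^ 2 - 2 * (y * y') * C ≤ y ^ 2 * y' ^ 2 / 2 := by
    have h0 := sq_nonneg (2 * C + y * y')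
    linarith [h0]
  have hB : S ^ 2 ≤ 1 := pow_le_one₀ hS0 hS1
  have hB' : T ^ 2 ≤ 1 := pow_le_one₀ hT0 hT1
  have hC : y ^ 2 * S ≤ y ^ 2 := mul_le_of_le_one_right (sq_nonneg y) hS1
  have hC' : y' ^ 2 * T ≤ y' ^ 2 := mul_le_of_le_one_right (sq_nonneg y') hT1
  have hD : y ^ 2 * y' ^ 2 ≤ Ry ^ 2 * Ry ^ 2 :=
    mul_le_mul hy2 hy'2 (sq_nonneg y') (sq_nonneg Ry)
  have hE : (y ^ 2 - y' ^ 2) ^ 2 ≤ (Ry ^ 2) ^ 2 := by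
    apply sq_le_sq'
    · linarith [sq_nonneg y, sq_nonneg y']
    · linarith [sq_nonneg y, sq_nonneg y']
  linarith [hA, hB, hB', hC, hC', hy2, hy'2, hD, hE]
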